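/- Let F : Δ → Δ be a C^{1+α} uniformly expanding map and r satisfy condition (3). If ψ ∈ C^α_loc(Δ^r) and s = σ + ib with σ ≤ 0, then there exists a constant C > 0 (independent of ψ, s, h) such that ‖ψ_s∘h‖_α ≤ (sup(r∘h) + C)‖ψ‖_α for all h ∈ 𝓗, where ψ_s(x) = ∫_0^{r(x)} e^{su}ψ(x,u) du and ‖ψ_s∘h‖_α = |ψ_s∘h|_∞ + |ψ_s∘h|_α is the C^α norm on Δ. -/

import Mathlib

open MeasureTheory Set

noncomputable section

/-- Data of a full-branch piecewise `C^{1+α}` map of `Δ = [0,1]`, with a countable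
partition (mod Lebesgue-null sets) into open intervals `(c m, d m)`, together with
the inverse branches `h m` (one for each partition element) and their derivatives. -/
structure ExpandingData where
  /-- the Hölder exponent `α ∈ (0,1]` -/
  α : ℝ
  αpos : 0 < α
  αle : α ≤ 1
  /-- left endpoints of the partition elements -/
  c : ℕ → ℝ
  /-- right endpoints of the partition elements -/
  d : ℕ → ℝ
  cd : ∀ m, c m < d m
  sub : ∀ m, Ioo (c m) (d m) ⊆ Icc (0:ℝ) 1
  disj : ∀ m m', m ≠ m' → Disjoint (Ioo (c m) (d m)) (Ioo (c m') (d m'))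
  full : volume (Icc (0:ℝ) 1 \ ⋃ m, Ioo (c m) (d m)) = 0
  /-- the map `F` -/
  F : ℝ → ℝ
  Fmeas : Measurable F
  Fmaps : MapsTo F (Icc (0:ℝ) 1) (Icc (0:ℝ) 1)
  /-- the derivative of `F` (on the partition elements) -/
  DF : ℝ → ℝ
  Fderiv : ∀ m, ∀ x ∈ Ioo (c m) (d m), HasDerivAt F (DF x) x
  Fholder : ∀ m, ∃ K, ∀ x ∈ Ioo (c m) (d m), ∀ y ∈ Ioo (c m) (d m),
      |DF x - DF y| ≤ K * |x - y| ^ α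
  /-- full branches: `F(J) = Δ` -/
  Fonto : ∀ m, F '' Ioo (c m) (d m) = Ioo (0:ℝ) 1
  /-- the inverse branch of `F` associated to the `m`-th partition element,
  i.e. the inverse of the homeomorphism `closure (c m, d m) → Δ` extending `F` -/
  h : ℕ → ℝ → ℝ
  /-- the derivative of the inverse branch `h m` -/
  Dh : ℕ → ℝ → ℝ
  hcont : ∀ m, ContinuousOn (h m) (Icc (0:ℝ) 1)
  himage : ∀ m, h m '' Icc (0:ℝ) 1 = Icc (c m) (d m)
  hinv : ∀ m, ∀ x ∈ Icc (0:ℝ) 1, F (h m x) = x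
  hderiv : ∀ m, ∀ x ∈ Icc (0:ℝ) 1, HasDerivWithinAt (h m) (Dh m x) (Icc (0:ℝ) 1) x

namespace ExpandingData

variable (S : ExpandingData)

/-- Composition of inverse branches along a word `w`; for `w` of length `n` this is
an inverse branch of `F^n`, and all elements of `𝓗_n` arise this way. -/
def br : List ℕ → ℝ → ℝ
  | [] => id
  | m :: w => fun x => S.h m (br w x)

/-- The derivative of the composed inverse branch `br w`. -/
def Dbr : List ℕ → ℝ → ℝ
  | [] => fun _ => 1
  | m :: w => fun x => S.Dh m (br S w x) * Dbr w x

/-- Condition (1): `sup |h'| ≤ C₁ ρ^n` for every inverse branch `h ∈ 𝓗_n`, `n ≥ 1`. -/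
def Cond1 (C₁ ρ : ℝ) : Prop :=
  0 < C₁ ∧ ρ ∈ Ioo (0:ℝ) 1 ∧
    ∀ n : ℕ, 1 ≤ n → ∀ w : List ℕ, w.length = n →
      ∀ x ∈ Icc (0:ℝ) 1, |S.Dbr w x| ≤ C₁ * ρ ^ n

/-- Condition (2): the `α`-Hölder seminorm of `log |h'|` is at most `C₂`, `h ∈ 𝓗`. -/
def Cond2 (C₂ : ℝ) : Prop :=
  0 < C₂ ∧ ∀ m, ∀ x ∈ Icc (0:ℝ) 1, ∀ y ∈ Icc (0:ℝ) 1,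
    |Real.log (|S.Dh m x|) - Real.log (|S.Dh m y|)| ≤ C₂ * |x - y| ^ S.α

/-- `sup_Δ |h'|` for the one-step inverse branch `h m ∈ 𝓗`. -/
def DhSup (m : ℕ) : ℝ := sSup ((fun x => |S.Dh m x|) '' Icc (0:ℝ) 1)

end ExpandingData

/-- A roof function `r : Δ → (0,∞)`, `C^1` on the partition elements,
bounded away from zero. -/
structure RoofData (S : ExpandingData) where
  /-- the roof function -/
  r : ℝ → ℝ
  rmeas : Measurable r
  rpos : ∃ r₀ > 0, ∀ x ∈ Icc (0:ℝ) 1, r₀ ≤ r x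
  /-- the derivative of `r` (on the partition elements) -/
  Dr : ℝ → ℝ
  rderiv : ∀ m, ∀ x ∈ Ioo (S.c m) (S.d m), HasDerivAt r (Dr x) x

variable {S : ExpandingData}

/-- `sup_Δ (r ∘ h)` for the one-step inverse branch `h m ∈ 𝓗`. -/
def rhSup (R : RoofData S) (m : ℕ) : ℝ :=
  sSup ((fun x => R.r (S.h m x)) '' Icc (0:ℝ) 1)

/-- Condition (3): `sup |(r ∘ h)'| ≤ C₃` for all `h ∈ 𝓗`. -/
def Cond3 (R : RoofData S) (C₃ : ℝ) : Prop :=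
  0 < C₃ ∧ ∀ m, ∀ x ∈ Icc (0:ℝ) 1, |R.Dr (S.h m x) * S.Dh m x| ≤ C₃

/-- Condition (4): exponential tail,
`Σ_{h ∈ 𝓗} e^{ε sup (r∘h)} sup|h'| < ∞` for some `ε > 0`. -/
def Cond4 (R : RoofData S) : Prop :=
  (∀ m, BddAbove ((fun x => R.r (S.h m x)) '' Icc (0:ℝ) 1)) ∧
    ∃ ε > 0, Summable fun m => Real.exp (ε * rhSup R m) * S.DhSup m

/-- Condition (5) (UNI): `r` is not cohomologous to a function constant on the
partition elements, via a `C^1` transfer function. -/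
def Cond5 (R : RoofData S) : Prop :=
  ¬ ∃ ψ φ Dφ : ℝ → ℝ,
      (∀ m, ∃ k, ∀ x ∈ Ioo (S.c m) (S.d m), ψ x = k) ∧
      (∀ x ∈ Icc (0:ℝ) 1, HasDerivWithinAt φ (Dφ x) (Icc (0:ℝ) 1) x) ∧
      ContinuousOn Dφ (Icc (0:ℝ) 1) ∧
      ∀ m, ∀ x ∈ Ioo (S.c m) (S.d m), R.r x = ψ x + φ (S.F x) - φ x

/-- The suspension space `Δ^r = {(x,u) : x ∈ Δ, 0 ≤ u ≤ r x}`
(a fundamental domain for the quotient by `(x, r x) ∼ (F x, 0)`). -/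
def SuspSet (R : RoofData S) : Set (ℝ × ℝ) :=
  {p | p.1 ∈ Icc (0:ℝ) 1 ∧ 0 ≤ p.2 ∧ p.2 ≤ R.r p.1}

/-- Birkhoff sums `r_n = Σ_{j<n} r ∘ F^j` of the roof function. -/
def birkhoff (R : RoofData S) (n : ℕ) (x : ℝ) : ℝ :=
  ∑ j ∈ Finset.range n, R.r (S.F^[j] x)

/-- `Φ` is the suspension semiflow `F_t(x,u) = (x, u+t)` computed modulo the
identifications `(x, r x) ∼ (F x, 0)`. -/
def IsSuspensionSemiflow (R : RoofData S) (Φ : ℝ → ℝ × ℝ → ℝ × ℝ) : Prop :=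
  ∀ t, 0 ≤ t → ∀ x ∈ Icc (0:ℝ) 1, ∀ u, 0 ≤ u → u ≤ R.r x → ∀ n : ℕ,
    birkhoff R n x ≤ u + t → u + t < birkhoff R (n + 1) x →
      Φ t (x, u) = (S.F^[n] x, u + t - birkhoff R n x)

/-- The suspension of the measure `μF`: `μ_F^r = (μ_F × Leb)|_{Δ^r} / ∫ r dμ_F`. -/
def suspMeasure (R : RoofData S) (μF : Measure ℝ) : Measure (ℝ × ℝ) :=
  (ENNReal.ofReal (∫ x, R.r x ∂μF))⁻¹ • ((μF.prod volume).restrict (SuspSet R))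

/-- The set of values `|f p|`, `p ∈ Δ^r`. -/
def suspSupSet (R : RoofData S) (f : ℝ × ℝ → ℝ) : Set ℝ :=
  (fun p => |f p|) '' SuspSet R

/-- The sup norm `|f|_∞` over `Δ^r`. -/
def suspSup (R : RoofData S) (f : ℝ × ℝ → ℝ) : ℝ := sSup (suspSupSet R f)

/-- The set of local Hölder quotients of `f` over `Δ^r`. -/
def suspHolSet (R : RoofData S) (f : ℝ × ℝ → ℝ) : Set ℝ :=
  {y | ∃ m : ℕ, ∃ x₁ ∈ Icc (0:ℝ) 1, ∃ x₂ ∈ Icc (0:ℝ) 1, x₁ ≠ x₂ ∧ ∃ u : ℝ,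
      (S.h m x₁, u) ∈ SuspSet R ∧ (S.h m x₂, u) ∈ SuspSet R ∧
      y = |f (S.h m x₁, u) - f (S.h m x₂, u)| / |x₁ - x₂| ^ S.α}

/-- The local Hölder seminorm `|f|_{α,loc}` on `Δ^r`. -/
def suspHol (R : RoofData S) (f : ℝ × ℝ → ℝ) : ℝ := sSup (suspHolSet R f)

/-- The norm `‖f‖_α = |f|_∞ + |f|_{α,loc}` on `C^α_loc(Δ^r)`. -/
def suspCα (R : RoofData S) (f : ℝ × ℝ → ℝ) : ℝ := suspSup R f + suspHol R f

/-- Differentiation along the semiflow direction. -/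
def dtDeriv (f : ℝ × ℝ → ℝ) : ℝ × ℝ → ℝ := fun p => deriv (fun v => f (p.1, v)) p.2

/-- The norm `‖f‖_{α,2} = Σ_{j≤2} ‖∂_t^j f‖_α` on `C^{α,2}_loc(Δ^r)`. -/
def suspCα2 (R : RoofData S) (f : ℝ × ℝ → ℝ) : ℝ :=
  ∑ j ∈ Finset.range 3, suspCα R (dtDeriv^[j] f)

/-- Membership in `C^α_loc(Δ^r)` (with measurability, as part of being in `L^∞`). -/
def MemSuspCα (R : RoofData S) (f : ℝ × ℝ → ℝ) : Prop :=
  Measurable f ∧ BddAbove (suspSupSet R f) ∧ BddAbove (suspHolSet R f)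

/-- Membership in `C^{α,2}_loc(Δ^r)`. -/
def MemSuspCα2 (R : RoofData S) (f : ℝ × ℝ → ℝ) : Prop :=
  Measurable f ∧ ∀ j ≤ 2,
    BddAbove (suspSupSet R (dtDeriv^[j] f)) ∧ BddAbove (suspHolSet R (dtDeriv^[j] f))

/-- `φ_s(x) = ∫_0^{r(x)} e^{-su} φ(x,u) du`. -/
def phiS (R : RoofData S) (φ : ℝ × ℝ → ℝ) (s : ℂ) (x : ℝ) : ℂ :=
  ∫ u in (0:ℝ)..(R.r x), Complex.exp (-s * u) * (φ (x, u) : ℂ)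

/-- `ψ_s(x) = ∫_0^{r(x)} e^{su} ψ(x,u) du`. -/
def psiS (R : RoofData S) (ψ : ℝ × ℝ → ℝ) (s : ℂ) (x : ℝ) : ℂ :=
  ∫ u in (0:ℝ)..(R.r x), Complex.exp (s * u) * (ψ (x, u) : ℂ)

/-- `Ĵ_n(s) = (∫ r dμ_F)⁻¹ ∫_Δ (φ_s ∘ F^n) e^{-s r_n} ψ_s dμ_F`. -/
def Jhat (R : RoofData S) (μF : Measure ℝ) (φ ψ : ℝ × ℝ → ℝ) (n : ℕ) (s : ℂ) : ℂ :=
  ((∫ x, R.r x ∂μF : ℝ) : ℂ)⁻¹ *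
    ∫ x, phiS R φ s (S.F^[n] x) * Complex.exp (-s * (birkhoff R n x : ℝ)) *
      psiS R ψ s x ∂μF
/-- The set of values `‖g x‖`, `x ∈ Δ`, for a complex-valued function on `Δ`. -/
def cSupSet (g : ℝ → ℂ) : Set ℝ := (fun x => ‖g x‖) '' Icc (0:ℝ) 1

/-- The sup norm `|g|_∞` over `Δ`. -/
def cSup (g : ℝ → ℂ) : ℝ := sSup (cSupSet g)

/-- The set of `α`-Hölder quotients of `g` over `Δ`. -/
def cHolSet (αe : ℝ) (g : ℝ → ℂ) : Set ℝ :=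
  {y | ∃ x ∈ Icc (0:ℝ) 1, ∃ z ∈ Icc (0:ℝ) 1, x ≠ z ∧ y = ‖g x - g z‖ / |x - z| ^ αe}

/-- The `α`-Hölder seminorm `|g|_α` over `Δ`. -/
def cHol (αe : ℝ) (g : ℝ → ℂ) : ℝ := sSup (cHolSet αe g)

/-- The `C^α(Δ)` norm `‖g‖_α = |g|_∞ + |g|_α`. -/
def cNorm (αe : ℝ) (g : ℝ → ℂ) : ℝ := cSup g + cHol αe g

variable (S) in
/-- The set of local Hölder quotients of `g` (through inverse branches `h ∈ 𝓗`). -/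
def cHolLocSet (g : ℝ → ℂ) : Set ℝ :=
  {y | ∃ m : ℕ, ∃ x ∈ Icc (0:ℝ) 1, ∃ z ∈ Icc (0:ℝ) 1, x ≠ z ∧
      y = ‖g (S.h m x) - g (S.h m z)‖ / |x - z| ^ S.α}

variable (S) in
/-- The local Hölder seminorm `|g|_{α,loc}` on `Δ`. -/
def cHolLoc (g : ℝ → ℂ) : ℝ := sSup (cHolLocSet S g)

variable (S) in
/-- The equivalent norms `‖g‖_b = max{|g|_∞, |g|_{α,loc}/(1+|b|^α)}`. -/
def bNorm (b : ℝ) (g : ℝ → ℂ) : ℝ := max (cSup g) (cHolLoc S g / (1 + |b| ^ S.α))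

variable (S) in
/-- Membership in `C^α_loc(Δ)`. -/
def MemCαLoc (g : ℝ → ℂ) : Prop := BddAbove (cSupSet g) ∧ BddAbove (cHolLocSet S g)

variable (S) in
/-- Membership in `C^α(Δ)`. -/
def MemCα (g : ℝ → ℂ) : Prop := BddAbove (cSupSet g) ∧ BddAbove (cHolSet S.α g)



variable {S : ExpandingData}

lemma h_mem_Icc (S : ExpandingData) (m : ℕ) {x : ℝ} (hx : x ∈ Icc (0:ℝ) 1) :
    S.h m x ∈ Icc (0:ℝ) 1 := by
  have h1 : S.h m x ∈ Icc (S.c m) (S.d m) := by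
    rw [← S.himage m]; exact mem_image_of_mem _ hx
  have h2 : Icc (S.c m) (S.d m) ⊆ Icc (0:ℝ) 1 := by
    rw [← closure_Ioo (S.cd m).ne]
    exact closure_minimal (S.sub m) isClosed_Icc
  exact h2 h1

lemma h_mem_Ioo (S : ExpandingData) (m : ℕ) {x : ℝ} (hx : x ∈ Ioo (0:ℝ) 1) :
    S.h m x ∈ Ioo (S.c m) (S.d m) := by
  have hx' : x ∈ S.F '' Ioo (S.c m) (S.d m) := by rw [S.Fonto m]; exact hx
  obtain ⟨y, hy, hFy⟩ := hx'
  have hy' : y ∈ S.h m '' Icc (0:ℝ) 1 := by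
    rw [S.himage m]; exact Ioo_subset_Icc_self hy
  obtain ⟨x', hx'', hhx'⟩ := hy'
  have hxx : x' = x := by rw [← S.hinv m x' hx'', hhx', hFy]
  rw [hxx] at hhx'
  rw [hhx']; exact hy

lemma rh_lip (R : RoofData S) {C₃ : ℝ} (h3 : Cond3 R C₃) (m : ℕ)
    {x z : ℝ} (hx : x ∈ Ioo (0:ℝ) 1) (hz : z ∈ Ioo (0:ℝ) 1) :
    |R.r (S.h m x) - R.r (S.h m z)| ≤ C₃ * |x - z| := by
  have key : ∀ y ∈ Ioo (0:ℝ) 1, HasDerivWithinAt (fun t => R.r (S.h m t))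
      (R.Dr (S.h m y) * S.Dh m y) (Ioo (0:ℝ) 1) y := by
    intro y hy
    have h1 : HasDerivWithinAt (S.h m) (S.Dh m y) (Ioo (0:ℝ) 1) y :=
      (S.hderiv m y (Ioo_subset_Icc_self hy)).mono Ioo_subset_Icc_self
    exact (R.rderiv m (S.h m y) (h_mem_Ioo S m hy)).comp_hasDerivWithinAt y h1
  have bound : ∀ y ∈ Ioo (0:ℝ) 1, ‖R.Dr (S.h m y) * S.Dh m y‖ ≤ C₃ := by
    intro y hy
    rw [Real.norm_eq_abs]
    exact h3.2 m y (Ioo_subset_Icc_self hy)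
  have := Convex.norm_image_sub_le_of_norm_hasDerivWithin_le key bound (convex_Ioo _ _) hz hx
  simpa [Real.norm_eq_abs] using this

lemma rh_bdd (R : RoofData S) {C₃ : ℝ} (h3 : Cond3 R C₃) (m : ℕ) :
    BddAbove ((fun x => R.r (S.h m x)) '' Icc (0:ℝ) 1) := by
  refine ⟨max (max (R.r (S.h m 0)) (R.r (S.h m 1))) (R.r (S.h m (1/2)) + C₃), ?_⟩
  rintro y ⟨x, hx, rfl⟩
  rcases eq_or_lt_of_le hx.1 with h0 | h0
  · exact le_max_of_le_left (le_max_of_le_left (by rw [← h0]))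
  rcases eq_or_lt_of_le hx.2 with h1 | h1
  · exact le_max_of_le_left (le_max_of_le_right (by rw [h1]))
  have hmem : x ∈ Ioo (0:ℝ) 1 := ⟨h0, h1⟩
  have hhalf : (1/2 : ℝ) ∈ Ioo (0:ℝ) 1 := by norm_num
  have hl := rh_lip R h3 m hmem hhalf
  have habs : |x - 1/2| ≤ 1 := by
    rw [abs_le]; constructor <;> [linarith [hmem.1]; linarith [hmem.2]]
  have h2 : |R.r (S.h m x) - R.r (S.h m (1/2))| ≤ C₃ := by
    refine hl.trans ?_
    calc C₃ * |x - 1/2| ≤ C₃ * 1 := mul_le_mul_of_nonneg_left habs h3.1.le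
      _ = C₃ := mul_one _
  refine le_max_of_le_right ?_
  have := le_abs_self (R.r (S.h m x) - R.r (S.h m (1/2)))
  linarith

lemma suspSup_nonneg (R : RoofData S) (ψ : ℝ × ℝ → ℝ) : 0 ≤ suspSup R ψ := by
  apply Real.sSup_nonneg
  rintro y ⟨p, _, rfl⟩
  exact abs_nonneg _

lemma suspHol_nonneg (R : RoofData S) (ψ : ℝ × ℝ → ℝ) : 0 ≤ suspHol R ψ := by
  apply Real.sSup_nonneg
  rintro y ⟨m, x₁, _, x₂, _, _, u, _, _, rfl⟩
  positivity

lemma norm_exp_le_one {s : ℂ} (hs : s.re ≤ 0) {u : ℝ} (hu : 0 ≤ u) :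
    ‖Complex.exp (s * u)‖ ≤ 1 := by
  rw [Complex.norm_exp]
  have h : (s * u).re = s.re * u := by simp [Complex.mul_re]
  rw [h]
  exact Real.exp_le_one_iff.mpr (mul_nonpos_of_nonpos_of_nonneg hs hu)

lemma norm_integrand_le (R : RoofData S) {ψ : ℝ × ℝ → ℝ} (hb : BddAbove (suspSupSet R ψ))
    {s : ℂ} (hs : s.re ≤ 0) {p u : ℝ} (hmem : (p, u) ∈ SuspSet R) :
    ‖Complex.exp (s * u) * (ψ (p, u) : ℂ)‖ ≤ suspSup R ψ := by
  rw [norm_mul]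
  have h1 : ‖Complex.exp (s * u)‖ ≤ 1 := norm_exp_le_one hs hmem.2.1
  have h2 : ‖(ψ (p, u) : ℂ)‖ ≤ suspSup R ψ := by
    rw [show ‖((ψ (p, u)) : ℂ)‖ = |ψ (p, u)| by simp]
    exact le_csSup hb ⟨(p, u), hmem, rfl⟩
  calc ‖Complex.exp (s * u)‖ * ‖(ψ (p, u) : ℂ)‖ ≤ 1 * suspSup R ψ :=
        mul_le_mul h1 h2 (norm_nonneg _) zero_le_one
    _ = suspSup R ψ := one_mul _

lemma intble (R : RoofData S) {ψ : ℝ × ℝ → ℝ} (hm : Measurable ψ)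
    (hb : BddAbove (suspSupSet R ψ))
    {s : ℂ} (hs : s.re ≤ 0) {p : ℝ} (hp : p ∈ Icc (0:ℝ) 1) {t₁ t₂ : ℝ}
    (h1 : 0 ≤ t₁) (h12 : t₁ ≤ t₂) (h2 : t₂ ≤ R.r p) :
    IntervalIntegrable (fun u => Complex.exp (s * u) * (ψ (p, u) : ℂ)) volume t₁ t₂ := by
  rw [intervalIntegrable_iff_integrableOn_Ioc_of_le h12]
  apply Measure.integrableOn_of_bounded (M := suspSup R ψ)
  · exact measure_Ioc_lt_top.ne
  · exact ((Complex.measurable_exp.comp (measurable_const.mul Complex.measurable_ofReal)).mul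
      (Complex.measurable_ofReal.comp
        (hm.comp (measurable_const.prodMk measurable_id)))).aestronglyMeasurable
  · filter_upwards [ae_restrict_mem measurableSet_Ioc] with u hu
    exact norm_integrand_le R hb hs ⟨hp, (h1.trans hu.1.le), hu.2.trans h2⟩

lemma norm_int_le (R : RoofData S) {ψ : ℝ × ℝ → ℝ} (hb : BddAbove (suspSupSet R ψ))
    {s : ℂ} (hs : s.re ≤ 0) {p : ℝ} (hp : p ∈ Icc (0:ℝ) 1) {t₁ t₂ : ℝ}
    (h1 : 0 ≤ t₁) (h12 : t₁ ≤ t₂) (h2 : t₂ ≤ R.r p) :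
    ‖∫ u in t₁..t₂, Complex.exp (s * u) * (ψ (p, u) : ℂ)‖ ≤ suspSup R ψ * (t₂ - t₁) := by
  have key := intervalIntegral.norm_integral_le_of_norm_le_const (C := suspSup R ψ)
    (f := fun u => Complex.exp (s * u) * (ψ (p, u) : ℂ)) (a := t₁) (b := t₂) ?_
  · rwa [abs_of_nonneg (by linarith)] at key
  · intro u hu
    rw [uIoc_of_le h12] at hu
    exact norm_integrand_le R hb hs ⟨hp, (h1.trans hu.1.le), hu.2.trans h2⟩




variable {S : ExpandingData}

lemma interior_holder (R : RoofData S) {C₃ : ℝ} (h3 : Cond3 R C₃)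
    {ψ : ℝ × ℝ → ℝ} (hψ : MemSuspCα R ψ) {s : ℂ} (hs : s.re ≤ 0) (m : ℕ)
    {x z : ℝ} (hx : x ∈ Ioo (0:ℝ) 1) (hz : z ∈ Ioo (0:ℝ) 1) (hxz : x ≠ z) :
    ‖psiS R ψ s (S.h m x) - psiS R ψ s (S.h m z)‖
      ≤ (rhSup R m * suspHol R ψ + C₃ * suspSup R ψ) * |x - z| ^ S.α := by
  obtain ⟨hm, hbS, hbH⟩ := hψ
  obtain ⟨r₀, hr₀, hrge⟩ := R.rpos
  set p := S.h m x with hpdef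
  set q := S.h m z with hqdef
  have hpI : p ∈ Icc (0:ℝ) 1 := h_mem_Icc S m (Ioo_subset_Icc_self hx)
  have hqI : q ∈ Icc (0:ℝ) 1 := h_mem_Icc S m (Ioo_subset_Icc_self hz)
  set a := R.r p with hadef
  set b := R.r q with hbdef
  set c := min a b with hcdef
  have ha0 : 0 < a := lt_of_lt_of_le hr₀ (hrge p hpI)
  have hb0 : 0 < b := lt_of_lt_of_le hr₀ (hrge q hqI)
  have hc0 : 0 ≤ c := le_min ha0.le hb0.le
  have hca : c ≤ a := min_le_left _ _
  have hcb : c ≤ b := min_le_right _ _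
  set f₁ := fun u : ℝ => Complex.exp (s * u) * (ψ (p, u) : ℂ) with hf₁
  set f₂ := fun u : ℝ => Complex.exp (s * u) * (ψ (q, u) : ℂ) with hf₂
  have I1c : IntervalIntegrable f₁ volume 0 c := intble R hm hbS hs hpI le_rfl hc0 hca
  have I1a : IntervalIntegrable f₁ volume c a := intble R hm hbS hs hpI hc0 hca le_rfl
  have I2c : IntervalIntegrable f₂ volume 0 c := intble R hm hbS hs hqI le_rfl hc0 hcb
  have I2b : IntervalIntegrable f₂ volume c b := intble R hm hbS hs hqI hc0 hcb le_rfl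
  have hGx : psiS R ψ s p = ∫ u in (0:ℝ)..a, f₁ u := rfl
  have hGz : psiS R ψ s q = ∫ u in (0:ℝ)..b, f₂ u := rfl
  have e1 : (∫ u in (0:ℝ)..a, f₁ u) = (∫ u in (0:ℝ)..c, f₁ u) + ∫ u in c..a, f₁ u :=
    (intervalIntegral.integral_add_adjacent_intervals I1c I1a).symm
  have e2 : (∫ u in (0:ℝ)..b, f₂ u) = (∫ u in (0:ℝ)..c, f₂ u) + ∫ u in c..b, f₂ u :=
    (intervalIntegral.integral_add_adjacent_intervals I2c I2b).symm
  have key : psiS R ψ s p - psiS R ψ s q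
      = (∫ u in (0:ℝ)..c, (f₁ u - f₂ u)) + ((∫ u in c..a, f₁ u) - ∫ u in c..b, f₂ u) := by
    rw [hGx, hGz, e1, e2, intervalIntegral.integral_sub I1c I2c]; ring
  have d0 : 0 < |x - z| := abs_pos.mpr (sub_ne_zero.mpr hxz)
  have dα0 : 0 < |x - z| ^ S.α := Real.rpow_pos_of_pos d0 _
  have hSup0 : 0 ≤ suspSup R ψ := suspSup_nonneg R ψ
  have hHol0 : 0 ≤ suspHol R ψ := suspHol_nonneg R ψ
  have T1 : ‖∫ u in (0:ℝ)..c, (f₁ u - f₂ u)‖ ≤ suspHol R ψ * |x - z| ^ S.α * c := by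
    have hb1 := intervalIntegral.norm_integral_le_of_norm_le_const
      (C := suspHol R ψ * |x - z| ^ S.α) (f := fun u => f₁ u - f₂ u) (a := (0:ℝ)) (b := c) ?_
    · rwa [sub_zero, abs_of_nonneg hc0] at hb1
    · intro u hu
      rw [uIoc_of_le hc0] at hu
      have hu0 : 0 ≤ u := hu.1.le
      have hmem1 : (p, u) ∈ SuspSet R := ⟨hpI, hu0, hu.2.trans hca⟩
      have hmem2 : (q, u) ∈ SuspSet R := ⟨hqI, hu0, hu.2.trans hcb⟩
      have hdiff : |ψ (p, u) - ψ (q, u)| ≤ suspHol R ψ * |x - z| ^ S.α := by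
        have hy : |ψ (p, u) - ψ (q, u)| / |x - z| ^ S.α ≤ suspHol R ψ :=
          le_csSup hbH ⟨m, x, Ioo_subset_Icc_self hx, z, Ioo_subset_Icc_self hz, hxz,
            u, hmem1, hmem2, rfl⟩
        rw [div_le_iff₀ dα0] at hy
        exact hy
      have hfe : f₁ u - f₂ u = Complex.exp (s * u) * ((ψ (p, u) : ℂ) - (ψ (q, u) : ℂ)) := by
        rw [hf₁, hf₂]; ring
      show ‖f₁ u - f₂ u‖ ≤ _
      rw [hfe, norm_mul]
      have hsub : ‖((ψ (p, u) : ℂ) - (ψ (q, u) : ℂ))‖ = |ψ (p, u) - ψ (q, u)| := by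
        simp [← Complex.ofReal_sub]
      calc ‖Complex.exp (s * u)‖ * ‖((ψ (p, u) : ℂ) - (ψ (q, u) : ℂ))‖
          ≤ 1 * (suspHol R ψ * |x - z| ^ S.α) := by
            rw [hsub]
            exact mul_le_mul (norm_exp_le_one hs hu0) hdiff (abs_nonneg _) zero_le_one
        _ = suspHol R ψ * |x - z| ^ S.α := one_mul _
  have T2 : ‖∫ u in c..a, f₁ u‖ ≤ suspSup R ψ * (a - c) := norm_int_le R hbS hs hpI hc0 hca le_rfl
  have T3 : ‖∫ u in c..b, f₂ u‖ ≤ suspSup R ψ * (b - c) := norm_int_le R hbS hs hqI hc0 hcb le_rfl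
  have hab : (a - c) + (b - c) = |a - b| := by
    rcases le_total a b with h | h
    · rw [hcdef, min_eq_left h, abs_sub_comm, abs_of_nonneg (by linarith)]; ring
    · rw [hcdef, min_eq_right h, abs_of_nonneg (by linarith)]; ring
  have habs : |a - b| ≤ C₃ * |x - z| := rh_lip R h3 m hx hz
  have hxz1 : |x - z| ≤ |x - z| ^ S.α := by
    have hle1 : |x - z| ≤ 1 := by
      rw [abs_le]
      constructor
      · linarith [hx.1, hz.2]
      · linarith [hx.2, hz.1]
    calc |x - z| = |x - z| ^ (1 : ℝ) := (Real.rpow_one _).symm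
      _ ≤ |x - z| ^ S.α := Real.rpow_le_rpow_of_exponent_ge d0 hle1 S.αle
  have hcle : c ≤ rhSup R m :=
    hca.trans (le_csSup (rh_bdd R h3 m) ⟨x, Ioo_subset_Icc_self hx, rfl⟩)
  calc ‖psiS R ψ s p - psiS R ψ s q‖
      ≤ ‖∫ u in (0:ℝ)..c, (f₁ u - f₂ u)‖ + (‖∫ u in c..a, f₁ u‖ + ‖∫ u in c..b, f₂ u‖) := by
        rw [key]
        exact (norm_add_le _ _).trans (add_le_add_right (norm_sub_le _ _) _)
    _ ≤ suspHol R ψ * |x - z| ^ S.α * c + (suspSup R ψ * (a - c) + suspSup R ψ * (b - c)) :=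
        add_le_add T1 (add_le_add T2 T3)
    _ = suspHol R ψ * |x - z| ^ S.α * c + suspSup R ψ * ((a - c) + (b - c)) := by ring
    _ = suspHol R ψ * |x - z| ^ S.α * c + suspSup R ψ * |a - b| := by rw [hab]
    _ ≤ suspHol R ψ * |x - z| ^ S.α * rhSup R m + suspSup R ψ * (C₃ * |x - z| ^ S.α) := by
        refine add_le_add (mul_le_mul_of_nonneg_left hcle (by positivity)) ?_
        refine mul_le_mul_of_nonneg_left (habs.trans ?_) hSup0
        exact mul_le_mul_of_nonneg_left hxz1 h3.1.le
    _ = (rhSup R m * suspHol R ψ + C₃ * suspSup R ψ) * |x - z| ^ S.α := by ring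


lemma cHol_le_of_interior {αe : ℝ} (hα0 : 0 < αe) {A : ℝ} (hA : 0 ≤ A)
    (G : ℝ → ℂ)
    (hint : ∀ x ∈ Ioo (0:ℝ) 1, ∀ z ∈ Ioo (0:ℝ) 1, x ≠ z → ‖G x - G z‖ ≤ A * |x - z| ^ αe) :
    cHol αe G ≤ A := by
  by_cases hb : BddAbove (cHolSet αe G)
  swap
  · rw [cHol, Real.sSup_of_not_bddAbove hb]; exact hA
  obtain ⟨B₀, hB₀⟩ := hb
  set B := max B₀ 0 with hBdef
  have hB0 : 0 ≤ B := le_max_right _ _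
  have hquot : ∀ x ∈ Icc (0:ℝ) 1, ∀ z ∈ Icc (0:ℝ) 1, ‖G x - G z‖ ≤ B * |x - z| ^ αe := by
    intro x hx z hz
    by_cases hxz : x = z
    · rw [hxz, sub_self, norm_zero]
      exact mul_nonneg hB0 (Real.rpow_nonneg (abs_nonneg _) _)
    · have d0 : 0 < |x - z| ^ αe := Real.rpow_pos_of_pos (abs_pos.mpr (sub_ne_zero.mpr hxz)) _
      have hmem : ‖G x - G z‖ / |x - z| ^ αe ≤ B₀ := hB₀ ⟨x, hx, z, hz, hxz, rfl⟩
      rw [div_le_iff₀ d0] at hmem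
      exact hmem.trans (mul_le_mul_of_nonneg_right (le_max_left _ _) d0.le)
  have key : ∀ x ∈ Icc (0:ℝ) 1, ∀ z ∈ Icc (0:ℝ) 1, x < z → ‖G x - G z‖ ≤ A * |x - z| ^ αe := by
    intro x hx z hz hlt
    refine le_of_forall_pos_le_add fun ε hε => ?_
    have h2B : (0:ℝ) < 2 * B + 1 := by linarith
    have hε' : 0 < ε / (2 * B + 1) := div_pos hε h2B
    set δ := min ((z - x) / 2) ((ε / (2 * B + 1)) ^ (αe⁻¹ : ℝ)) with hδdef
    have hδpos : 0 < δ := lt_min (by linarith) (Real.rpow_pos_of_pos hε' _)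
    have hδle : δ ≤ (z - x) / 2 := min_le_left _ _
    set x' := x + δ with hx'def
    set z' := z - δ with hz'def
    have hx' : x' ∈ Ioo (0:ℝ) 1 := by
      constructor
      · have := hx.1; rw [hx'def]; linarith
      · have := hz.2; rw [hx'def]; linarith
    have hz' : z' ∈ Ioo (0:ℝ) 1 := by
      constructor
      · have := hx.1; rw [hz'def]; linarith
      · have := hz.2; rw [hz'def]; linarith
    have hd1 : |x - x'| = δ := by
      rw [show x - x' = -δ by rw [hx'def]; ring, abs_neg, abs_of_nonneg hδpos.le]
    have hd2 : |z' - z| = δ := by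
      rw [show z' - z = -δ by rw [hz'def]; ring, abs_neg, abs_of_nonneg hδpos.le]
    have h1 : ‖G x - G x'‖ ≤ B * δ ^ αe := by
      have := hquot x hx x' (Ioo_subset_Icc_self hx')
      rwa [hd1] at this
    have h2 : ‖G z' - G z‖ ≤ B * δ ^ αe := by
      have := hquot z' (Ioo_subset_Icc_self hz') z hz
      rwa [hd2] at this
    have h3 : ‖G x' - G z'‖ ≤ A * |x - z| ^ αe := by
      by_cases hxz' : x' = z'
      · rw [hxz', sub_self, norm_zero]
        exact mul_nonneg hA (Real.rpow_nonneg (abs_nonneg _) _)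
      · refine (hint x' hx' z' hz' hxz').trans ?_
        refine mul_le_mul_of_nonneg_left ?_ hA
        refine Real.rpow_le_rpow (abs_nonneg _) ?_ hα0.le
        have e1 : |x' - z'| = z - x - 2 * δ := by
          rw [show x' - z' = -(z - x - 2 * δ) by rw [hx'def, hz'def]; ring, abs_neg,
            abs_of_nonneg (by linarith)]
        have e2 : |x - z| = z - x := by
          rw [abs_sub_comm, abs_of_nonneg (by linarith)]
        rw [e1, e2]; linarith
    have h5 : δ ^ αe ≤ ε / (2 * B + 1) := by
      have hmono : δ ^ αe ≤ ((ε / (2 * B + 1)) ^ (αe⁻¹ : ℝ)) ^ αe :=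
        Real.rpow_le_rpow hδpos.le (min_le_right _ _) hα0.le
      rwa [Real.rpow_inv_rpow hε'.le hα0.ne'] at hmono
    have h6 : 2 * B * (ε / (2 * B + 1)) ≤ ε := by
      rw [mul_div_assoc', div_le_iff₀ h2B]
      nlinarith [mul_nonneg hB0 hε.le]
    calc ‖G x - G z‖ ≤ ‖G x - G x'‖ + ‖G x' - G z'‖ + ‖G z' - G z‖ := by
          have hsplit : G x - G z = (G x - G x') + (G x' - G z') + (G z' - G z) := by ring
          rw [hsplit]
          exact (norm_add_le _ _).trans (add_le_add_left (norm_add_le _ _) _)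
      _ ≤ B * δ ^ αe + A * |x - z| ^ αe + B * δ ^ αe := add_le_add (add_le_add h1 h3) h2
      _ = A * |x - z| ^ αe + 2 * B * δ ^ αe := by ring
      _ ≤ A * |x - z| ^ αe + ε := by
          have := mul_le_mul_of_nonneg_left h5 (by linarith : (0:ℝ) ≤ 2 * B)
          linarith
  refine Real.sSup_le ?_ hA
  rintro y ⟨x, hx, z, hz, hxz, rfl⟩
  rw [div_le_iff₀ (Real.rpow_pos_of_pos (abs_pos.mpr (sub_ne_zero.mpr hxz)) _)]
  rcases lt_or_gt_of_ne hxz with hlt | hlt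
  · exact key x hx z hz hlt
  · rw [norm_sub_rev, abs_sub_comm]; exact key z hz x hx hlt
theorem psiS_comp_branch_holder_estimate
    (S : ExpandingData) (R : RoofData S) (C₁ ρ C₂ : ℝ)
    (h1 : S.Cond1 C₁ ρ) (h2 : S.Cond2 C₂) (C₃ : ℝ) (h3 : Cond3 R C₃) :
    ∃ C > 0, ∀ ψ : ℝ × ℝ → ℝ, MemSuspCα R ψ →
      ∀ s : ℂ, s.re ≤ 0 → ∀ m : ℕ,
        cNorm S.α (fun x => psiS R ψ s (S.h m x)) ≤ (rhSup R m + C) * suspCα R ψ := by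
  refine ⟨C₃, h3.1, ?_⟩
  intro ψ hψ s hs m
  obtain ⟨hm, hbS, hbH⟩ := hψ
  obtain ⟨r₀, hr₀, hrge⟩ := R.rpos
  have hSup0 : 0 ≤ suspSup R ψ := suspSup_nonneg R ψ
  have hHol0 : 0 ≤ suspHol R ψ := suspHol_nonneg R ψ
  have hrh : BddAbove ((fun x => R.r (S.h m x)) '' Icc (0:ℝ) 1) := rh_bdd R h3 m
  have h0I : (0:ℝ) ∈ Icc (0:ℝ) 1 := ⟨le_rfl, zero_le_one⟩
  have hrh0 : 0 < rhSup R m :=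
    lt_of_lt_of_le (lt_of_lt_of_le hr₀ (hrge _ (h_mem_Icc S m h0I)))
      (le_csSup hrh ⟨0, h0I, rfl⟩)
  have hsup : cSup (fun x => psiS R ψ s (S.h m x)) ≤ suspSup R ψ * rhSup R m := by
    refine Real.sSup_le ?_ (mul_nonneg hSup0 hrh0.le)
    rintro y ⟨x, hx, rfl⟩
    have hpI := h_mem_Icc S m hx
    have ha0 : 0 ≤ R.r (S.h m x) := (hr₀.trans_le (hrge _ hpI)).le
    have hb1 : ‖psiS R ψ s (S.h m x)‖ ≤ suspSup R ψ * (R.r (S.h m x) - 0) :=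
      norm_int_le R hbS hs hpI le_rfl ha0 le_rfl
    refine hb1.trans ?_
    rw [sub_zero]
    exact mul_le_mul_of_nonneg_left (le_csSup hrh ⟨x, hx, rfl⟩) hSup0
  have hhol : cHol S.α (fun x => psiS R ψ s (S.h m x))
      ≤ rhSup R m * suspHol R ψ + C₃ * suspSup R ψ := by
    refine cHol_le_of_interior S.αpos ?_ _ ?_
    · have := mul_nonneg hrh0.le hHol0
      have := mul_nonneg h3.1.le hSup0
      linarith
    · intro x hx z hz hxz
      exact interior_holder R h3 ⟨hm, hbS, hbH⟩ hs m hx hz hxz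
  rw [cNorm, suspCα]
  nlinarith [mul_nonneg h3.1.le hHol0, hsup, hhol, mul_nonneg hrh0.le hHol0]
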